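/- Let G be a finite group, p a prime, and P a Sylow p-subgroup of G. If the center of P is not contained in the commutator subgroup [P,P], then G contains a non-Schur p-element. -/

import Mathlib

/-- A non-Schur element of a group `G` is an element `x` with
`x ∉ [C_G(x), C_G(x)]`. -/
def IsNonSchur {G : Type*} [Group G] (x : G) : Prop :=
  x ∉ ⁅Subgroup.centralizer {x}, Subgroup.centralizer {x}⁆

/-- A `p`-element is an element of `p`-power order. -/
def IsPElement (p : ℕ) {G : Type*} [Group G] (x : G) : Prop :=
  ∃ n : ℕ, orderOf x = p ^ n

theorem nonSchur_of_center_not_le_commutator (p : ℕ) (hp : p.Prime) (G : Type*) [Group G]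
    [Finite G] (P : Sylow p G)
    (h : ¬ Subgroup.center ↥(P : Subgroup G) ≤ commutator ↥(P : Subgroup G)) :
    ∃ x : G, IsPElement p x ∧ IsNonSchur x := by
  haveI : Fact p.Prime := ⟨hp⟩
  obtain ⟨z, hzc, hznc⟩ := SetLike.not_le_iff_exists.mp h
  -- `z : ↥P`, central in P, not in commutator of P
  set x : G := (z : G) with hxdef
  -- order of z is a p-power
  obtain ⟨k, hk⟩ := P.2 z
  obtain ⟨m, _, hm⟩ := (Nat.dvd_prime_pow hp).mp (orderOf_dvd_of_pow_eq_one hk)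
  have hordx : orderOf x = p ^ m := by
    rw [hxdef, Subgroup.orderOf_coe, hm]
  refine ⟨x, ⟨m, hordx⟩, ?_⟩
  -- the centralizer
  set C : Subgroup G := Subgroup.centralizer {x} with hCdef
  have hPC : (P : Subgroup G) ≤ C := by
    intro g hg
    rw [hCdef, Subgroup.mem_centralizer_iff]
    rintro y rfl
    exact congrArg Subtype.val ((Subgroup.mem_center_iff.mp hzc ⟨g, hg⟩)).symm
  have hxC : x ∈ C := hPC z.2
  -- x is central in C
  have hxcent : ∀ c : G, c ∈ C → c * x = x * c := fun c hc =>
    (Subgroup.mem_centralizer_iff.mp hc x rfl).symm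
  intro hmem
  -- move into the subgroup C
  set x' : ↥C := ⟨x, hxC⟩ with hx'def
  have hx'comm : x' ∈ commutator ↥C := by
    have hmap : (commutator ↥C).map C.subtype = ⁅C, C⁆ := by
      rw [commutator_def, Subgroup.map_commutator, ← MonoidHom.range_eq_map,
        Subgroup.range_subtype]
    have hx2 : x ∈ (commutator ↥C).map C.subtype := by rw [hmap]; exact hmem
    obtain ⟨y, hy, hyx⟩ := hx2
    rwa [show y = x' from Subtype.ext hyx] at hy
  -- the transfer homomorphism from C to the abelianization of P
  set H : Subgroup ↥C := (P : Subgroup G).subgroupOf C with hHdef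
  have hHsylow : ∃ Q : Sylow p ↥C, (Q : Subgroup ↥C) = H := ⟨P.subtype hPC, rfl⟩
  obtain ⟨Q, hQ⟩ := hHsylow
  haveI : H.FiniteIndex := inferInstance
  have hindex : ¬ p ∣ H.index := by
    rw [← hQ]
    exact Q.not_dvd_index
  set e : ↥H ≃* ↥(P : Subgroup G) := Subgroup.subgroupOfEquivOfLe hPC with hedef
  set φ : ↥H →* Abelianization ↥(P : Subgroup G) :=
    Abelianization.of.comp e.toMonoidHom with hφdef
  have key : ∀ (k : ℕ) (g₀ : ↥C), g₀⁻¹ * x' ^ k * g₀ ∈ H → g₀⁻¹ * x' ^ k * g₀ = x' ^ k := by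
    intro k g₀ _
    have : x' * g₀ = g₀ * x' := Subtype.ext (hxcent (g₀ : G) g₀.2 ).symm
    have hcomm : Commute g₀ x' := this.symm
    rw [(hcomm.pow_right k).inv_left.eq, inv_mul_cancel_right]
  have htrans : MonoidHom.transfer φ x' = φ ⟨x' ^ H.index, MonoidHom.transfer_eq_pow_aux x' key⟩ :=
    MonoidHom.transfer_eq_pow φ x' key
  have h1 : MonoidHom.transfer φ x' = 1 :=
    Abelianization.commutator_subset_ker (MonoidHom.transfer φ) hx'comm
  -- identify φ ⟨x' ^ H.index, _⟩ with Abelianization.of (z ^ H.index)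
  have hval : (e ⟨x' ^ H.index, MonoidHom.transfer_eq_pow_aux x' key⟩ : G) = (z : G) ^ H.index :=
    rfl
  have hze : e ⟨x' ^ H.index, MonoidHom.transfer_eq_pow_aux x' key⟩ = z ^ H.index :=
    Subtype.ext (by push_cast [hval]; rfl)
  have hker : z ^ H.index ∈ commutator ↥(P : Subgroup G) := by
    have h2 : Abelianization.of (z ^ H.index) = 1 := by
      rw [← hze]
      rw [htrans] at h1
      exact h1
    exact (QuotientGroup.eq_one_iff _).mp h2
  -- since gcd(H.index, orderOf z) = 1, z itself is in the commutator
  have hcop : Nat.Coprime H.index (orderOf z) := by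
    rw [hm]
    exact (Nat.Prime.coprime_pow_of_not_dvd hp hindex).symm.symm
  obtain ⟨a, -, ha⟩ := Nat.exists_mul_mod_eq_one_of_coprime hcop (by
    rw [hm]; exact Nat.one_lt_pow (fun hm0 => by
      simp [hm0] at hm
      exact hznc (hm ▸ Subgroup.one_mem _)) hp.one_lt)
  have hz1 : z = (z ^ H.index) ^ a := by
    rw [← pow_mul, ← pow_mod_orderOf, ha, pow_one]
  exact hznc (hz1 ▸ Subgroup.pow_mem _ hker a)
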